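/- Let M be a finite subset of a countable group G, let V be a finite-dimensional vector space over a finite field (so V is a finite set), let S = L(V^M, V), and let s, t ∈ S^G be such that σ_s ∘ σ_t = id on V^G. Then σ_p is post-surjective for every p ∈ Σ(s); that is, σ_s is stably post-surjective. -/
import Mathlib


open scoped BigOperators

/-- The linear NUCA `σ_s : V^G → V^G` with memory `M ⊆ G` associated with the
configuration of local defining maps `s`, given in coefficient form:
`σ_s(x)(g) = ∑_{m ∈ M} s(g,m)(x(g·m))`. -/
def nucaMap {k V G : Type*} [Field k] [AddCommGroup V] [Module k V] [Group G]
    (M : Finset G) (s : G → G → (V →ₗ[k] V)) (x : G → V) : G → V :=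
  fun g => ∑ m ∈ M, s g m (x (g * m))

/-- Two configurations are asymptotic if they agree outside a finite set. -/
def Asymptotic {G A : Type*} (x y : G → A) : Prop :=
  Set.Finite {g : G | x g ≠ y g}

/-- A map `σ : V^G → V^G` is post-surjective if for all `x, y` with `y` asymptotic to
`σ(x)` there is `z` asymptotic to `x` with `σ(z) = y`. -/
def PostSurjective {G V : Type*} (σ : (G → V) → (G → V)) : Prop :=
  ∀ x y : G → V, Asymptotic y (σ x) → ∃ z : G → V, Asymptotic z x ∧ σ z = y

/-- `Σ(s)`: the closure, in the prodiscrete topology (local maps `S` discrete),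
of the shift orbit `{g·s : g ∈ G}` of the configuration of local defining maps `s`,
where `(g·s)(h) = s(g⁻¹h)`. -/
def orbitClosure {G E : Type*} [Group G] (s : G → G → E) : Set (G → G → E) :=
  @closure _ (@Pi.topologicalSpace G (fun _ => G → E) (fun _ => ⊥))
    (Set.range fun g : G => fun h : G => s (g⁻¹ * h))

/-- Over a finite vector space alphabet, a right-invertible linear NUCA is stably
post-surjective: if `σ_s ∘ σ_t = id` then `σ_p` is post-surjective for every
`p ∈ Σ(s)`. -/
lemma mem_orbitClosure' {G E : Type*} [Group G] {s p : G → G → E}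
    (hp : p ∈ orbitClosure s) (F : Finset G) : ∃ g : G, ∀ h ∈ F, p h = s (g⁻¹ * h) := by
  letI : TopologicalSpace (G → E) := ⊥
  haveI : DiscreteTopology (G → E) := ⟨rfl⟩
  rw [orbitClosure, mem_closure_iff] at hp
  obtain ⟨q, hq1, g, rfl⟩ := hp (Set.pi ↑F (fun h => {p h}))
    (isOpen_set_pi F.finite_toSet (fun h _ => isOpen_discrete _))
    (fun h _ => rfl)
  exact ⟨g, fun h hh => (hq1 h hh).symm⟩

lemma ultra_exists_val {α E : Type*} [Finite E] (U : Ultrafilter α) (f : α → E) :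
    ∃ v : E, {a | f a = v} ∈ U := by
  obtain ⟨v, hv⟩ := Ultrafilter.eq_pure_of_finite (U.map f)
  refine ⟨v, ?_⟩
  have : {v} ∈ U.map f := by rw [hv]; exact Filter.mem_pure.2 rfl
  simpa [Ultrafilter.mem_map, Set.preimage, Set.mem_singleton_iff] using this

lemma nucaMap_add {k V G : Type*} [Field k] [AddCommGroup V] [Module k V] [Group G]
    (M : Finset G) (p : G → G → (V →ₗ[k] V)) (x y : G → V) :
    nucaMap M p (x + y) = nucaMap M p x + nucaMap M p y := by
  funext g
  simp [nucaMap, Finset.sum_add_distrib]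

theorem stmt4 {k V G : Type*} [Field k] [Finite k] [AddCommGroup V] [Module k V]
    [FiniteDimensional k V] [Group G] [Countable G]
    (M : Finset G) (s t : G → G → (V →ₗ[k] V))
    (hs : ∀ g, ∀ m ∉ M, s g m = 0) (ht : ∀ g, ∀ m ∉ M, t g m = 0)
    (h : ∀ x : G → V, nucaMap M s (nucaMap M t x) = x) :
    ∀ p ∈ orbitClosure s, PostSurjective (nucaMap M p) := by
  classical
  haveI : Finite V := Module.finite_of_finite k
  haveI : Finite (V →ₗ[k] V) :=
    Finite.of_injective (fun f => (f : V → V)) (fun f g hfg => LinearMap.ext fun v => congrFun hfg v)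
  intro p hp
  -- the filter of "matching shifts"
  set T : Finset G → Set G := fun F => {γ : G | ∀ h ∈ F, p h = s (γ⁻¹ * h)} with hT
  have hTne : ∀ F, (T F).Nonempty := fun F => mem_orbitClosure' hp F
  have hdir : Directed (· ≥ ·) (fun F => Filter.principal (T F)) := by
    intro F F'
    refine ⟨F ∪ F', Filter.principal_mono.2 fun γ hγ h hh => hγ h (Finset.mem_union_left _ hh),
      Filter.principal_mono.2 fun γ hγ h hh => hγ h (Finset.mem_union_right _ hh)⟩
  haveI : Filter.NeBot (⨅ F, Filter.principal (T F)) :=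
    Filter.iInf_neBot_of_directed hdir (fun F => Filter.principal_neBot_iff.2 (hTne F))
  set U : Ultrafilter G := Ultrafilter.of (⨅ F, Filter.principal (T F)) with hU
  have hTU : ∀ F, T F ∈ U := fun F =>
    Ultrafilter.of_le _ (Filter.mem_iInf_of_mem F (Filter.mem_principal_self _))
  -- define q as the ultrafilter limit of the shifted t
  have hqex : ∀ g m : G, ∃ v : V →ₗ[k] V, {γ : G | t (γ⁻¹ * g) m = v} ∈ U :=
    fun g m => ultra_exists_val U _
  choose q hq using hqex
  -- key matching property
  have hmatch : ∀ F : Finset G, ∃ γ : G,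
      (∀ h ∈ F, p h = s (γ⁻¹ * h)) ∧ (∀ h ∈ F, ∀ m, q h m = t (γ⁻¹ * h) m) := by
    intro F
    have hA : (⋂ h ∈ F, ⋂ m ∈ M, {γ : G | t (γ⁻¹ * h) m = q h m}) ∈ U :=
      (Filter.biInter_finset_mem F).2 fun h _ =>
        (Filter.biInter_finset_mem M).2 fun m _ => hq h m
    obtain ⟨γ, hγ⟩ := Filter.nonempty_of_mem ((U : Filter G).inter_mem (hTU F) hA)
    refine ⟨γ, hγ.1, fun g hg m => ?_⟩
    by_cases hm : m ∈ M
    · have := hγ.2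
      simp only [Set.mem_iInter, Set.mem_setOf_eq] at this
      exact (this g hg m hm).symm
    · rw [ht _ _ hm]
      -- q g m = 0 when m ∉ M
      obtain ⟨γ', hγ'⟩ := Filter.nonempty_of_mem (hq g m)
      rw [← hγ', ht _ _ hm]
  -- q vanishes outside M
  have hqM : ∀ g, ∀ m ∉ M, q g m = 0 := by
    intro g m hm
    obtain ⟨γ', hγ'⟩ := Filter.nonempty_of_mem (hq g m)
    rw [← hγ', ht _ _ hm]
  -- σ_p ∘ σ_q = id
  have hpq : ∀ x : G → V, nucaMap M p (nucaMap M q x) = x := by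
    intro x
    funext g
    obtain ⟨γ, hγ1, hγ2⟩ := hmatch (insert g (M.image (fun m => g * m)))
    set x' : G → V := fun h => x (γ * h) with hx'
    calc nucaMap M p (nucaMap M q x) g
        = ∑ m ∈ M, s (γ⁻¹ * g) m ((nucaMap M t x') ((γ⁻¹ * g) * m)) := by
          refine Finset.sum_congr rfl fun m hm => ?_
          rw [hγ1 g (Finset.mem_insert_self _ _)]
          congr 1
          simp only [nucaMap]
          refine Finset.sum_congr rfl fun m' hm' => ?_
          rw [hγ2 (g * m) (Finset.mem_insert_of_mem (Finset.mem_image_of_mem _ hm)) m']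
          congr 1
          · congr 1; group
          · simp only [hx']; congr 1; group
      _ = x' (γ⁻¹ * g) := congrFun (h x') (γ⁻¹ * g)
      _ = x g := by simp [hx']
  -- post-surjectivity
  intro x y hxy
  set w : G → V := fun g => y g - nucaMap M p x g with hw
  have hwfin : {g : G | w g ≠ 0}.Finite := by
    refine hxy.subset fun g hg => ?_
    simp only [Set.mem_setOf_eq, hw, sub_ne_zero] at hg ⊢
    exact hg
  refine ⟨x + nucaMap M q w, ?_, ?_⟩
  · -- asymptotic
    refine Set.Finite.subset
      (Set.Finite.biUnion M.finite_toSet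
        (fun m _ => (hwfin.image (fun a => a * m⁻¹)))) ?_
    intro g hg
    simp only [Set.mem_setOf_eq, Pi.add_apply] at hg
    have hne : nucaMap M q w g ≠ 0 := fun h0 => hg (by rw [h0, add_zero])
    have hex : ∃ m ∈ M, w (g * m) ≠ 0 := by
      by_contra hc
      push_neg at hc
      apply hne
      simp only [nucaMap]
      refine Finset.sum_eq_zero fun m hm => ?_
      rw [hc m hm, map_zero]
    obtain ⟨m, hm, hwm⟩ := hex
    exact Set.mem_biUnion hm ⟨g * m, hwm, by group⟩
  · rw [nucaMap_add, hpq w]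
    funext g
    simp [hw]
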